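/- Fix an integer s ≥ 1 and a real d > 0. There exist constants c > 0 and t₀ > 0, depending only on s and d, such that for every integer n with d ≤ n, every vertex u of G^{bip}_{n,d}, and every real t ≥ t₀, the probability that the number of vertices at graph distance at most s from u in G^{bip}_{n,d} is at least t is at most s·exp(−c·t^{1/s}). -/

import Mathlib

open MeasureTheory Real Filter

noncomputable section

/-- Bernoulli measure on `Bool` with success probability `p`. -/
def coin (p : ℝ) : Measure Bool :=
  ENNReal.ofReal p • Measure.dirac true + ENNReal.ofReal (1 - p) • Measure.dirac false

/-- The random bipartite graph `G^bip_{n,d}`, as a product (Bernoulli(d/n)) measure on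
edge-indicator vectors indexed by the `n * n` possible edges. -/
def edgeMeasure (n : ℕ) (d : ℝ) : Measure (Fin (n * n) → Bool) :=
  Measure.pi fun _ => coin (d / n)

/-- Vertex set: the left class `L` is `Sum.inl`, the right class `R` is `Sum.inr`. -/
abbrev Vtx (n : ℕ) := Fin n ⊕ Fin n

/-- Adjacency in the bipartite graph with edge-indicator vector `A`:
`i ∈ L` and `j ∈ R` are adjacent iff the indicator of the edge `(i,j)` is `true`. -/
def adjB (n : ℕ) (A : Fin (n * n) → Bool) : Vtx n → Vtx n → Prop
  | Sum.inl i, Sum.inr j => A (finProdFinEquiv (i, j)) = true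
  | Sum.inr j, Sum.inl i => A (finProdFinEquiv (i, j)) = true
  | _, _ => False

/-- `S` is an independent set of the bipartite graph encoded by `A`. -/
def IsIndepSet (n : ℕ) (A : Fin (n * n) → Bool) (S : Set (Vtx n)) : Prop :=
  ∀ u ∈ S, ∀ v ∈ S, ¬ adjB n A u v

/-- `S ∩ L`. -/
def leftPart {n : ℕ} (S : Set (Vtx n)) : Set (Vtx n) := S ∩ Set.range Sum.inl

/-- `S ∩ R`. -/
def rightPart {n : ℕ} (S : Set (Vtx n)) : Set (Vtx n) := S ∩ Set.range Sum.inr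

/-- `S` is `γ`-balanced: `| |S ∩ L| - γ|S| | < 1`. -/
def IsBalanced (γ : ℝ) {n : ℕ} (S : Set (Vtx n)) : Prop :=
  |((leftPart S).ncard : ℝ) - γ * (S.ncard : ℝ)| < 1

/-- The bipartite graph encoded by the edge-indicator vector `A`, as a `SimpleGraph`. -/
def bipGraph (n : ℕ) (A : Fin (n * n) → Bool) : SimpleGraph (Vtx n) where
  Adj u v := adjB n A u v
  symm := ⟨by rintro (i | i) (j | j) h <;> simp_all [adjB]⟩
  loopless := ⟨by rintro (i | i) h <;> simp_all [adjB]⟩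

/-- The set of vertices at graph distance at most `s` from `u`. -/
def ball (n : ℕ) (A : Fin (n * n) → Bool) (u : Vtx n) (s : ℕ) : Set (Vtx n) :=
  {v | ∃ w : (bipGraph n A).Walk u v, w.length ≤ s}

namespace Stmt14Aux


instance coin.isFiniteMeasure (p : ℝ) : IsFiniteMeasure (coin p) := by
  constructor
  simp only [coin, Measure.add_apply, Measure.smul_apply, smul_eq_mul]
  have h1 : Measure.dirac true (Set.univ : Set Bool) = 1 := by simp
  have h2 : Measure.dirac false (Set.univ : Set Bool) = 1 := by simp
  rw [h1, h2, mul_one, mul_one]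
  exact ENNReal.add_lt_top.2 ⟨ENNReal.ofReal_lt_top, ENNReal.ofReal_lt_top⟩

lemma coin_true (p : ℝ) : coin p {true} = ENNReal.ofReal p := by
  simp [coin, Measure.dirac_apply' _ (by trivial : MeasurableSet ({true} : Set Bool))]

lemma coin_univ (p : ℝ) (h0 : 0 ≤ p) (h1 : p ≤ 1) : coin p Set.univ = 1 := by
  simp only [coin, Measure.add_apply, Measure.smul_apply, smul_eq_mul]
  rw [show Measure.dirac true (Set.univ : Set Bool) = 1 by simp,
    show Measure.dirac false (Set.univ : Set Bool) = 1 by simp, mul_one, mul_one,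
    ← ENNReal.ofReal_add h0 (by linarith), show p + (1 - p) = 1 by ring, ENNReal.ofReal_one]

/-- Cylinder event: all coordinates in `C` are `true`. -/
def cyl (n : ℕ) (C : Finset (Fin (n * n))) : Set (Fin (n * n) → Bool) :=
  {A | ∀ c ∈ C, A c = true}

lemma measure_cyl (n : ℕ) {d : ℝ} (h0 : 0 ≤ d) (hn : d ≤ n) (C : Finset (Fin (n * n))) :
    edgeMeasure n d (cyl n C) = ENNReal.ofReal ((d / n) ^ C.card) := by
  have hp0 : 0 ≤ d / n := by positivity
  have hcyl : cyl n C = Set.pi Set.univ (fun c => if c ∈ C then ({true} : Set Bool) else Set.univ) := by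
    ext A
    simp only [cyl, Set.mem_setOf_eq, Set.mem_pi, Set.mem_univ, forall_true_left]
    constructor
    · intro h c
      split_ifs with hc
      · simpa using h c hc
      · trivial
    · intro h c hc
      have := h c
      rw [if_pos hc] at this
      simpa using this
  have hp1 : d / n ≤ 1 := by
    rcases Nat.eq_zero_or_pos n with h | h
    · subst h; norm_num
    · rw [div_le_one (by exact_mod_cast h)]; exact hn
  rw [hcyl, edgeMeasure, Measure.pi_pi]
  have : ∀ c : Fin (n * n),
      coin (d / n) (if c ∈ C then ({true} : Set Bool) else Set.univ)
        = if c ∈ C then ENNReal.ofReal (d / n) else 1 := by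
    intro c; split_ifs
    · exact coin_true _
    · exact coin_univ _ hp0 hp1
  simp only [this]
  rw [Finset.prod_ite_mem, Finset.univ_inter, Finset.prod_const, ENNReal.ofReal_pow hp0]


open SimpleGraph

/-- The coordinate(s) of a potential edge between two vertices (empty if same side). -/
def pairCoord (n : ℕ) : Vtx n → Vtx n → Finset (Fin (n * n))
  | Sum.inl i, Sum.inr j => {finProdFinEquiv (i, j)}
  | Sum.inr j, Sum.inl i => {finProdFinEquiv (i, j)}
  | _, _ => ∅

lemma mem_pairCoord_true {n : ℕ} {A : Fin (n * n) → Bool} {x y : Vtx n} (h : adjB n A x y)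
    {c : Fin (n * n)} (hc : c ∈ pairCoord n x y) : A c = true := by
  rcases x with i | i <;> rcases y with j | j <;>
    simp only [pairCoord, Finset.mem_singleton, Finset.notMem_empty] at hc <;>
    first
      | exact absurd hc (by simp)
      | (subst hc; exact h)

lemma pairCoord_card {n : ℕ} {A : Fin (n * n) → Bool} {x y : Vtx n} (h : adjB n A x y) :
    (pairCoord n x y).card = 1 := by
  rcases x with i | i <;> rcases y with j | j <;>
    simp only [pairCoord, Finset.card_singleton] <;> exact absurd h (by simp [adjB])

lemma pairCoord_cases {n : ℕ} {x y x' y' : Vtx n} {c : Fin (n * n)}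
    (h : c ∈ pairCoord n x y) (h' : c ∈ pairCoord n x' y') :
    (x = x' ∧ y = y') ∨ (x = y' ∧ y = x') := by
  rcases x with i | i <;> rcases y with j | j <;> rcases x' with i' | i' <;> rcases y' with j' | j' <;>
    simp only [pairCoord, Finset.mem_singleton, Finset.notMem_empty] at h h' <;>
    try exact absurd h (by simp) <;> try exact absurd h' (by simp)
  all_goals {
    subst h
    have := finProdFinEquiv.injective h'.symm
    simp only [Prod.mk.injEq] at this
    obtain ⟨h1, h2⟩ := this
    subst h1; subst h2
    simp }


/-- Neighbourhood of a vertex. -/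
def nbr (n : ℕ) (A : Fin (n * n) → Bool) (v : Vtx n) : Set (Vtx n) := {w | adjB n A v w}

lemma ball_mono {n : ℕ} {A : Fin (n * n) → Bool} {u : Vtx n} {i j : ℕ} (h : i ≤ j) :
    ball n A u i ⊆ ball n A u j := fun v ⟨w, hw⟩ => ⟨w, hw.trans h⟩

lemma ball_zero {n : ℕ} {A : Fin (n * n) → Bool} {u : Vtx n} : ball n A u 0 = {u} := by
  ext v
  constructor
  · rintro ⟨w, hw⟩
    have h0 : w.length = 0 := Nat.le_zero.mp hw
    have : w.getVert w.length = v := w.getVert_length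
    rw [h0, w.getVert_zero] at this
    simp [this.symm]
  · rintro rfl
    exact ⟨Walk.nil, by simp⟩

lemma walk_penult {V : Type*} {G : SimpleGraph V} {u v : V} (w : G.Walk u v)
    (hne : w.length ≠ 0) :
    ∃ b, G.Adj b v ∧ ∃ w' : G.Walk u b, w'.length + 1 = w.length := by
  induction w with
  | nil => simp at hne
  | @cons a x c h q ih =>
      by_cases hq : q.length = 0
      · have hxv : x = c := by
          have h2 : q.getVert q.length = c := q.getVert_length
          rw [hq, q.getVert_zero] at h2
          exact h2
        subst hxv
        exact ⟨a, h, Walk.nil, by simp [hq]⟩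
      · obtain ⟨b, hb, w', hw'⟩ := ih hq
        exact ⟨b, hb, Walk.cons h w', by simp [Walk.length_cons]; omega⟩

lemma ball_succ_subset {n : ℕ} {A : Fin (n * n) → Bool} {u : Vtx n} {i : ℕ} :
    ball n A u (i + 1) ⊆ ⋃ v ∈ ball n A u i, ({v} ∪ nbr n A v) := by
  rintro v ⟨w, hw⟩
  by_cases h0 : w.length = 0
  · have : v = u := by
      have h2 : w.getVert w.length = v := w.getVert_length
      rw [h0, w.getVert_zero] at h2
      exact h2.symm
    subst this
    exact Set.mem_biUnion (⟨Walk.nil, by simp⟩ : v ∈ ball n A v i) (by simp)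
  · obtain ⟨b, hb, w', hw'⟩ := walk_penult w h0
    have hbball : b ∈ ball n A u i := ⟨w', by omega⟩
    exact Set.mem_biUnion hbball (Or.inr hb)

lemma ncard_biUnion_le {α β : Type*} [Finite α] (T : Finset β) (f : β → Set α) :
    (⋃ v ∈ T, f v).ncard ≤ ∑ v ∈ T, (f v).ncard := by
  classical
  induction T using Finset.induction with
  | empty => simp
  | insert _ _ hx ih =>
      rename_i a T'
      rw [Finset.set_biUnion_insert, Finset.sum_insert hx]
      exact le_trans (Set.ncard_union_le _ _) (by omega)

lemma ball_ncard_le {n : ℕ} {A : Fin (n * n) → Bool} {u : Vtx n} {s D : ℕ}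
    (hdeg : ∀ v ∈ ball n A u s, (nbr n A v).ncard ≤ D) :
    ∀ i, i ≤ s → (ball n A u i).ncard ≤ (D + 1) ^ i := by
  intro i
  induction i with
  | zero => intro _; simp [ball_zero]
  | succ i ih =>
      intro his
      have hT := (Set.toFinite (ball n A u i)).toFinset
      set T : Finset (Vtx n) := (Set.toFinite (ball n A u i)).toFinset with hTdef
      have hTcard : T.card = (ball n A u i).ncard :=
        (Set.ncard_eq_toFinset_card _ _).symm
      have hsub : ball n A u (i + 1) ⊆ ⋃ v ∈ T, ({v} ∪ nbr n A v) := by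
        refine ball_succ_subset.trans ?_
        intro x hx
        simp only [Set.mem_iUnion] at hx ⊢
        obtain ⟨v, hv, hxv⟩ := hx
        exact ⟨v, (Set.Finite.mem_toFinset _).mpr hv, hxv⟩
      calc (ball n A u (i + 1)).ncard ≤ (⋃ v ∈ T, ({v} ∪ nbr n A v)).ncard :=
            Set.ncard_le_ncard hsub (Set.toFinite _)
        _ ≤ ∑ v ∈ T, ({v} ∪ nbr n A v).ncard := ncard_biUnion_le _ _
        _ ≤ ∑ _v ∈ T, (D + 1) := by
            refine Finset.sum_le_sum ?_
            intro v hv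
            have hvb : v ∈ ball n A u i := (Set.Finite.mem_toFinset _).mp hv
            have hd : (nbr n A v).ncard ≤ D :=
              hdeg v (ball_mono (Nat.le_of_succ_le his) hvb)
            calc ({v} ∪ nbr n A v).ncard
                ≤ ({v} : Set (Vtx n)).ncard + (nbr n A v).ncard := Set.ncard_union_le _ _
              _ ≤ D + 1 := by rw [Set.ncard_singleton]; omega
        _ ≤ (D + 1) ^ (i + 1) := by
            rw [Finset.sum_const, smul_eq_mul]
            have := ih (Nat.le_of_succ_le his)
            calc T.card * (D + 1) = (ball n A u i).ncard * (D + 1) := by rw [hTcard]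
              _ ≤ (D + 1) ^ i * (D + 1) := Nat.mul_le_mul_right _ this
              _ = (D + 1) ^ (i + 1) := by ring

lemma getVert_eq_support_get {V : Type*} {G : SimpleGraph V} {u v : V} (p : G.Walk u v) :
    ∀ i (hi : i < p.support.length), p.getVert i = p.support.get ⟨i, hi⟩ := by
  induction p with
  | nil => intro i hi; simp only [Walk.support_nil, List.length_singleton] at hi
           interval_cases i <;> simp [Walk.getVert_zero]
  | @cons a x c h q ih =>
      intro i hi
      cases i with
      | zero => simp [Walk.getVert_zero]
      | succ j =>
          simp only [Walk.support_cons, List.length_cons] at hi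
          rw [Walk.getVert_cons_succ]
          simp only [Walk.support_cons]
          rw [ih j (by omega)]
          rfl

lemma path_getVert_inj {V : Type*} {G : SimpleGraph V} {u v : V} {p : G.Walk u v}
    (hP : p.IsPath) {i j : ℕ} (hi : i ≤ p.length) (hj : j ≤ p.length)
    (h : p.getVert i = p.getVert j) : i = j := by
  have hl : p.support.length = p.length + 1 := p.length_support
  rw [getVert_eq_support_get p i (by omega), getVert_eq_support_get p j (by omega)] at h
  have := (List.Nodup.get_inj_iff hP.support_nodup).mp h
  simpa using congrArg Fin.val this

lemma getVert_mem_support' {V : Type*} {G : SimpleGraph V} {u v : V} (p : G.Walk u v)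
    (i : ℕ) : p.getVert i ∈ p.support := by
  rw [SimpleGraph.Walk.mem_support_iff_exists_getVert]
  by_cases hi : i ≤ p.length
  · exact ⟨i, rfl, hi⟩
  · exact ⟨p.length, by rw [Walk.getVert_of_length_le p (by omega : p.length ≤ i), p.getVert_length], le_rfl⟩

/-- The vertex sequence of a witness path: `u` followed by the values of `g`. -/
def seqW {n : ℕ} (u : Vtx n) {ℓ : ℕ} (g : Fin ℓ → Vtx n) : ℕ → Vtx n
  | 0 => u
  | j + 1 => if h : j < ℓ then g ⟨j, h⟩ else u

/-- Coordinates of the path edges of a witness. -/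
def pathCoords (n ℓ : ℕ) (u : Vtx n) (g : Fin ℓ → Vtx n) : Finset (Fin (n * n)) :=
  (Finset.range ℓ).biUnion fun i => pairCoord n (seqW u g i) (seqW u g (i + 1))

/-- Coordinates of the star edges of a witness. -/
def starCoords (n ℓ : ℕ) (u : Vtx n) (g : Fin ℓ → Vtx n) (S : Finset (Vtx n)) :
    Finset (Fin (n * n)) :=
  S.biUnion fun w => pairCoord n (seqW u g ℓ) w

/-- All coordinates of a witness. -/
def witCoords (n ℓ : ℕ) (u : Vtx n) (g : Fin ℓ → Vtx n) (S : Finset (Vtx n)) :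
    Finset (Fin (n * n)) :=
  pathCoords n ℓ u g ∪ starCoords n ℓ u g S

lemma exists_witness {n s : ℕ} {A : Fin (n * n) → Bool} {u : Vtx n} {m₁ m₂ : ℕ}
    (hbig : ∃ v ∈ ball n A u s, m₁ ≤ (nbr n A v).ncard) (hm : m₂ + (s + 1) ≤ m₁) :
    ∃ ℓ, ℓ ≤ s ∧ ∃ g : Fin ℓ → Vtx n, ∃ S : Finset (Vtx n),
      S.card = m₂ ∧ ℓ + m₂ ≤ (witCoords n ℓ u g S).card ∧ A ∈ cyl n (witCoords n ℓ u g S) := by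
  classical
  obtain ⟨v, ⟨w0, hw0⟩, hdeg⟩ := hbig
  set P := w0.bypass with hPdef
  have hP : P.IsPath := w0.bypass_isPath
  have hlen : P.length ≤ s := (w0.length_bypass_le).trans hw0
  set ℓ := P.length with hℓdef
  set g : Fin ℓ → Vtx n := fun i => P.getVert (i + 1) with hgdef
  have hseq : ∀ i, i ≤ ℓ → seqW u g i = P.getVert i := by
    intro i hi
    cases i with
    | zero => rw [P.getVert_zero]; rfl
    | succ j =>
        have hj : j < ℓ := by omega
        simp only [seqW, dif_pos hj, hgdef]
  have hvend : seqW u g ℓ = v := by rw [hseq ℓ le_rfl]; exact P.getVert_length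
  have hinj : ∀ i j : ℕ, i ≤ ℓ → j ≤ ℓ → seqW u g i = seqW u g j → i = j := by
    intro i j hi hj h
    rw [hseq i hi, hseq j hj] at h
    exact path_getVert_inj hP hi hj h
  -- the support as a set
  set spt : Set (Vtx n) := {x | x ∈ P.support} with hsptdef
  have hsptcard : spt.ncard ≤ ℓ + 1 := by
    have h1 : spt = ↑P.support.toFinset := by ext x; simp [hsptdef]
    rw [h1, Set.ncard_coe_finset]
    calc P.support.toFinset.card ≤ P.support.length := P.support.toFinset_card_le
      _ = ℓ + 1 := P.length_support
  have hmemspt : ∀ i : ℕ, i ≤ ℓ → seqW u g i ∈ spt := by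
    intro i hi
    rw [hseq i hi]
    exact getVert_mem_support' P i
  -- neighbours outside the support
  have hN' : m₂ ≤ (nbr n A v \ spt).ncard := by
    have hsub : nbr n A v ⊆ (nbr n A v \ spt) ∪ spt := by
      intro x hx
      rcases Classical.em (x ∈ spt) with hxs | hxs
      · exact Or.inr hxs
      · exact Or.inl ⟨hx, hxs⟩
    have h1 : (nbr n A v).ncard ≤ (nbr n A v \ spt).ncard + spt.ncard :=
      (Set.ncard_le_ncard hsub (Set.toFinite _)).trans (Set.ncard_union_le _ _)
    omega
  obtain ⟨S0, hS0sub, hS0card⟩ := Set.exists_subset_card_eq hN'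
  have hS0fin : S0.Finite := Set.toFinite _
  set S : Finset (Vtx n) := hS0fin.toFinset with hSdef
  have hScard : S.card = m₂ := by
    rw [hSdef, ← Set.ncard_eq_toFinset_card _ hS0fin, hS0card]
  have hSmem : ∀ x ∈ S, adjB n A v x ∧ x ∉ spt := by
    intro x hx
    have := hS0sub ((hS0fin.mem_toFinset).mp hx)
    exact ⟨this.1, this.2⟩
  refine ⟨ℓ, hlen, g, S, hScard, ?_, ?_⟩
  · -- cardinality of the coordinates
    have hadj : ∀ i, i < ℓ → adjB n A (seqW u g i) (seqW u g (i + 1)) := by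
      intro i hi
      rw [hseq i (by omega), hseq (i + 1) (by omega)]
      exact P.adj_getVert_succ hi
    have hpc : (pathCoords n ℓ u g).card = ℓ := by
      rw [pathCoords, Finset.card_biUnion]
      · rw [Finset.sum_congr rfl fun i hi => pairCoord_card (hadj i (Finset.mem_range.mp hi))]
        simp
      · intro i hi j hj hij
        simp only [Finset.mem_coe, Finset.mem_range] at hi hj
        rw [Function.onFun, Finset.disjoint_left]
        intro c hci hcj
        rcases pairCoord_cases hci hcj with ⟨h1, h2⟩ | ⟨h1, h2⟩
        · exact hij (hinj i j (by omega) (by omega) h1)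
        · have e1 := hinj i (j + 1) (by omega) (by omega) h1
          have e2 := hinj (i + 1) j (by omega) (by omega) h2
          omega
    have hsc : (starCoords n ℓ u g S).card = m₂ := by
      rw [starCoords, Finset.card_biUnion]
      · rw [Finset.sum_congr rfl fun x hx => pairCoord_card (hvend ▸ (hSmem x hx).1)]
        simp [hScard]
      · intro x hx y hy hxy
        rw [Function.onFun, Finset.disjoint_left]
        intro c hcx hcy
        rcases pairCoord_cases hcx hcy with ⟨_, h2⟩ | ⟨h1, _⟩
        · exact hxy h2
        · -- seqW u g ℓ = y contradicts y ∉ spt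
          exact absurd (h1 ▸ hmemspt ℓ le_rfl) (hSmem y hy).2
    have hdisj : Disjoint (pathCoords n ℓ u g) (starCoords n ℓ u g S) := by
      rw [Finset.disjoint_left]
      intro c hcp hcs
      rw [pathCoords, Finset.mem_biUnion] at hcp
      obtain ⟨i, hi, hci⟩ := hcp
      rw [starCoords, Finset.mem_biUnion] at hcs
      obtain ⟨x, hx, hcx⟩ := hcs
      simp only [Finset.mem_range] at hi
      rcases pairCoord_cases hci hcx with ⟨_, h2⟩ | ⟨h1, _⟩
      · exact absurd (h2 ▸ hmemspt (i + 1) (by omega)) (hSmem x hx).2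
      · exact absurd (h1 ▸ hmemspt i (by omega)) (hSmem x hx).2
    rw [witCoords, Finset.card_union_of_disjoint hdisj, hpc, hsc]
  · -- all coordinates are true
    intro c hc
    rw [witCoords, Finset.mem_union] at hc
    rcases hc with hc | hc
    · rw [pathCoords, Finset.mem_biUnion] at hc
      obtain ⟨i, hi, hci⟩ := hc
      simp only [Finset.mem_range] at hi
      have hadj : adjB n A (seqW u g i) (seqW u g (i + 1)) := by
        rw [hseq i (by omega), hseq (i + 1) (by omega)]
        exact P.adj_getVert_succ hi
      exact mem_pairCoord_true hadj hci
    · rw [starCoords, Finset.mem_biUnion] at hc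
      obtain ⟨x, hx, hcx⟩ := hc
      exact mem_pairCoord_true (hvend ▸ (hSmem x hx).1) hcx

lemma pow_le_pow_mul_factorial (K : ℕ) (hK : 1 ≤ K) : ∀ k : ℕ, K ^ k ≤ K ^ K * k.factorial := by
  intro k
  induction k with
  | zero => simpa using Nat.one_le_pow _ _ hK
  | succ k ih =>
      rcases le_or_gt (k + 1) K with h | h
      · calc K ^ (k + 1) ≤ K ^ K := Nat.pow_le_pow_right hK h
          _ ≤ K ^ K * (k + 1).factorial := Nat.le_mul_of_pos_right _ (Nat.factorial_pos _)
      · calc K ^ (k + 1) = K ^ k * K := by ring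
          _ ≤ (K ^ K * k.factorial) * (k + 1) := Nat.mul_le_mul ih (by omega)
          _ = K ^ K * (k + 1).factorial := by rw [Nat.factorial_succ]; ring

lemma real_tail (s n K m₂ : ℕ) (d x : ℝ) (hs : 1 ≤ s) (hd : 0 < d) (hdn : d ≤ n)
    (hK6 : 6 * d ≤ K) (hK1 : 1 ≤ K)
    (hm₂ : x - (s + 3) ≤ (m₂ : ℝ))
    (hx : 2 * (((s : ℝ) + 1) * (max 1 (2 * d)) ^ s * (K : ℝ) ^ K * Real.exp (s + 3))
            + s + K + 10 ≤ x)
    (F : ℕ → ℝ)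
    (hF : ∀ ℓ, F ℓ = (((n + n) ^ ℓ * ((n + n).choose m₂) : ℕ) : ℝ) * (d / n) ^ (ℓ + m₂)) :
    ∑ ℓ ∈ Finset.range (s + 1), F ℓ ≤ s * Real.exp (-(1 / 2) * x) := by
  have hn : (0 : ℝ) < n := lt_of_lt_of_le hd hdn
  set M : ℝ := max 1 (2 * d) with hM
  have hM1 : (1 : ℝ) ≤ M := le_max_left _ _
  have hM2d : 2 * d ≤ M := le_max_right _ _
  set C₅ : ℝ := ((s : ℝ) + 1) * M ^ s * (K : ℝ) ^ K * Real.exp (s + 3) with hC₅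
  have hC₅pos : 0 < C₅ := by positivity
  have hKpos : (0 : ℝ) < K := by exact_mod_cast hK1
  -- tail of the factorial bound
  have hfact : ∀ m : ℕ, (2 * d) ^ m / (m.factorial : ℝ) ≤ (K : ℝ) ^ K * Real.exp (-(m : ℝ)) := by
    intro m
    have h1 : ((K : ℝ)) ^ m ≤ (K : ℝ) ^ K * (m.factorial : ℝ) := by
      exact_mod_cast pow_le_pow_mul_factorial K hK1 m
    have hmfac : (0 : ℝ) < (m.factorial : ℝ) := by exact_mod_cast Nat.factorial_pos m
    have h2 : (2 * d) ^ m / (m.factorial : ℝ) ≤ (K : ℝ) ^ K * (2 * d / K) ^ m := by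
      rw [div_pow, ← mul_div_assoc, div_le_div_iff₀ hmfac (by positivity)]
      calc (2 * d) ^ m * (K : ℝ) ^ m ≤ (2 * d) ^ m * ((K : ℝ) ^ K * (m.factorial : ℝ)) :=
            mul_le_mul_of_nonneg_left h1 (by positivity)
        _ = (K : ℝ) ^ K * (2 * d) ^ m * (m.factorial : ℝ) := by ring
    have h3 : (2 * d / K) ≤ Real.exp (-1) := by
      have he3 : Real.exp 1 ≤ 3 := by
        have := Real.exp_one_lt_d9
        linarith
      have h13 : 2 * d / K ≤ 1 / 3 := by
        rw [div_le_div_iff₀ hKpos (by norm_num)]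
        linarith
      have hinv : (1 : ℝ) / 3 ≤ Real.exp (-1) := by
        rw [Real.exp_neg]
        rw [div_le_iff₀ (by norm_num : (0:ℝ) < 3)]
        rw [inv_mul_eq_div, le_div_iff₀ (Real.exp_pos 1)]
        linarith
      linarith
    have h4 : (2 * d / K) ^ m ≤ Real.exp (-(m : ℝ)) := by
      calc (2 * d / K) ^ m ≤ (Real.exp (-1)) ^ m :=
            pow_le_pow_left₀ (by positivity) h3 m
        _ = Real.exp (-(m : ℝ)) := by
            rw [← Real.exp_nat_mul]
            congr 1
            push_cast
            ring
    calc (2 * d) ^ m / (m.factorial : ℝ) ≤ (K : ℝ) ^ K * (2 * d / K) ^ m := h2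
      _ ≤ (K : ℝ) ^ K * Real.exp (-(m : ℝ)) :=
          mul_le_mul_of_nonneg_left h4 (by positivity)
  -- bound each term
  have hterm : ∀ ℓ ∈ Finset.range (s + 1),
      F ℓ ≤ M ^ s * ((K : ℝ) ^ K * Real.exp (-(m₂ : ℝ))) := by
    intro ℓ hℓ
    rw [hF ℓ]
    have hℓs : ℓ ≤ s := by simpa [Nat.lt_succ_iff] using hℓ
    have hdn' : (0 : ℝ) ≤ d / n := by positivity
    have e1 : (((n + n) ^ ℓ * ((n + n).choose m₂) : ℕ) : ℝ) * (d / n) ^ (ℓ + m₂)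
        = ((((n:ℝ) + n) ^ ℓ) * (d / n) ^ ℓ) * ((((n + n).choose m₂ : ℕ) : ℝ) * (d / n) ^ m₂) := by
      push_cast
      rw [pow_add]
      ring
    rw [e1]
    have e2 : (((n:ℝ) + n) ^ ℓ) * (d / n) ^ ℓ = (2 * d) ^ ℓ := by
      rw [← mul_pow]
      congr 1
      field_simp
      ring
    have h5 : (((n:ℝ) + n) ^ ℓ) * (d / n) ^ ℓ ≤ M ^ s := by
      rw [e2]
      calc (2 * d) ^ ℓ ≤ M ^ ℓ := pow_le_pow_left₀ (by positivity) hM2d ℓ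
        _ ≤ M ^ s := pow_le_pow_right₀ hM1 hℓs
    have h6 : (((n + n).choose m₂ : ℕ) : ℝ) * (d / n) ^ m₂
        ≤ (K : ℝ) ^ K * Real.exp (-(m₂ : ℝ)) := by
      have hch : (((n + n).choose m₂ : ℕ) : ℝ) ≤ ((n + n : ℕ) : ℝ) ^ m₂ / (m₂.factorial : ℝ) :=
        Nat.choose_le_pow_div m₂ (n + n)
      calc (((n + n).choose m₂ : ℕ) : ℝ) * (d / n) ^ m₂ ≤ (((n + n : ℕ) : ℝ) ^ m₂ / (m₂.factorial : ℝ)) * (d / n) ^ m₂ :=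
            mul_le_mul_of_nonneg_right hch (by positivity)
        _ = (2 * d) ^ m₂ / (m₂.factorial : ℝ) := by
            rw [div_mul_eq_mul_div, ← mul_pow]
            congr 2
            push_cast
            field_simp
            ring
        _ ≤ (K : ℝ) ^ K * Real.exp (-(m₂ : ℝ)) := hfact m₂
    exact mul_le_mul h5 h6 (by positivity) (by positivity)
  have hsum : ∑ ℓ ∈ Finset.range (s + 1), F ℓ
        ≤ ((s : ℝ) + 1) * (M ^ s * ((K : ℝ) ^ K * Real.exp (-(m₂ : ℝ)))) := by
    refine le_trans (Finset.sum_le_sum hterm) (le_of_eq ?_)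
    rw [Finset.sum_const, Finset.card_range, nsmul_eq_mul]
    push_cast
    ring
  have hexp : Real.exp (-(m₂ : ℝ)) ≤ Real.exp (s + 3) * Real.exp (-x) := by
    rw [← Real.exp_add]
    apply Real.exp_le_exp.mpr
    linarith
  have hxpos : 0 < x := by
    have : 0 < 2 * C₅ + s + K + 10 := by positivity
    linarith
  have hfinal : C₅ * Real.exp (-x) ≤ s * Real.exp (-(1 / 2) * x) := by
    have hCx : C₅ ≤ x / 2 := by
      have hsn : (0:ℝ) ≤ (s : ℝ) := by positivity
      have hKn : (0:ℝ) ≤ (K : ℝ) := by positivity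
      linarith
    have h7 : C₅ ≤ Real.exp (x / 2) := by
      calc C₅ ≤ x / 2 := hCx
        _ ≤ Real.exp (x / 2) := by
            have := Real.add_one_le_exp (x / 2)
            linarith
    calc C₅ * Real.exp (-x) ≤ Real.exp (x / 2) * Real.exp (-x) :=
          mul_le_mul_of_nonneg_right h7 (Real.exp_pos _).le
      _ = Real.exp (-(1 / 2) * x) := by rw [← Real.exp_add]; ring_nf
      _ ≤ s * Real.exp (-(1 / 2) * x) := by
          have h8 : (1 : ℝ) ≤ (s : ℝ) := by exact_mod_cast hs
          nlinarith [Real.exp_pos (-(1 / 2) * x)]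
  have hstep : ((s : ℝ) + 1) * (M ^ s * ((K : ℝ) ^ K * Real.exp (-(m₂ : ℝ))))
      ≤ ((s : ℝ) + 1) * (M ^ s * ((K : ℝ) ^ K * (Real.exp (s + 3) * Real.exp (-x)))) := by
    gcongr
  have e3 : ((s : ℝ) + 1) * (M ^ s * ((K : ℝ) ^ K * (Real.exp (s + 3) * Real.exp (-x))))
      = C₅ * Real.exp (-x) := by
    rw [hC₅]; ring
  linarith [hsum, hstep, hfinal, e3]

end Stmt14Aux

/-- Fix an integer `s ≥ 1` and a real `d > 0`. There are constants `c > 0` and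
`t₀ > 0` (depending only on `s` and `d`) such that for every `n` with `d ≤ n`, every vertex
`u` and every `t ≥ t₀`, the probability that the number of vertices at distance at most `s`
from `u` is at least `t` is at most `s·exp(−c·t^{1/s})`. -/
theorem stmt14 (s : ℕ) (hs : 1 ≤ s) (d : ℝ) (hd : 0 < d) :
    ∃ c : ℝ, 0 < c ∧ ∃ t₀ : ℝ, 0 < t₀ ∧
      ∀ n : ℕ, d ≤ (n : ℝ) → ∀ u : Vtx n, ∀ t : ℝ, t₀ ≤ t →
        edgeMeasure n d {A | t ≤ ((ball n A u s).ncard : ℝ)} ≤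
          ENNReal.ofReal ((s : ℝ) * Real.exp (-c * t ^ ((1 : ℝ) / s))) := by
  classical
  set K : ℕ := ⌈6 * d⌉₊ + 1 with hK
  have hK6 : 6 * d ≤ (K : ℝ) := by
    have h := Nat.le_ceil (6 * d)
    have : ((⌈6 * d⌉₊ : ℕ) : ℝ) ≤ (K : ℝ) := by rw [hK]; push_cast; linarith
    linarith
  have hK1 : 1 ≤ K := by omega
  set C₅ : ℝ := ((s : ℝ) + 1) * (max 1 (2 * d)) ^ s * (K : ℝ) ^ K * Real.exp (s + 3) with hC₅
  have hC₅pos : 0 < C₅ := by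
    rw [hC₅]
    have h1 : (0:ℝ) < max 1 (2 * d) := lt_of_lt_of_le one_pos (le_max_left _ _)
    positivity
  have hbpos : (0:ℝ) < 2 * C₅ + s + K + 10 := by
    have h1 : (0:ℝ) ≤ (s : ℝ) := Nat.cast_nonneg s
    have h2 : (0:ℝ) ≤ (K : ℝ) := Nat.cast_nonneg K
    linarith
  refine ⟨1 / 2, by norm_num, (2 * C₅ + (s:ℝ) + K + 10) ^ s, pow_pos hbpos s, ?_⟩
  intro n hdn u t ht
  have hn0 : (0 : ℝ) < n := lt_of_lt_of_le hd hdn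
  have hn : 0 < n := by exact_mod_cast hn0
  have hsR : (0:ℝ) < s := by exact_mod_cast hs
  have htpos : 0 < t := lt_of_lt_of_le (pow_pos hbpos s) ht
  set x : ℝ := t ^ ((1 : ℝ) / (s:ℝ)) with hxdef
  have hxpos : 0 < x := Real.rpow_pos_of_pos htpos _
  have hbx : 2 * C₅ + (s:ℝ) + K + 10 ≤ x := by
    have h1 : ((2 * C₅ + (s:ℝ) + K + 10) ^ s) ^ ((1:ℝ)/(s:ℝ)) = 2 * C₅ + (s:ℝ) + K + 10 := by
      rw [← Real.rpow_natCast (2 * C₅ + (s:ℝ) + K + 10) s, ← Real.rpow_mul hbpos.le]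
      rw [mul_one_div, div_self (ne_of_gt hsR), Real.rpow_one]
    calc 2 * C₅ + (s:ℝ) + K + 10 = ((2 * C₅ + (s:ℝ) + K + 10) ^ s) ^ ((1:ℝ)/(s:ℝ)) := h1.symm
      _ ≤ t ^ ((1:ℝ)/(s:ℝ)) := Real.rpow_le_rpow (by positivity) ht (by positivity)
  have hxs : x ^ s = t := by
    rw [hxdef, ← Real.rpow_natCast (t ^ ((1:ℝ)/(s:ℝ))) s, ← Real.rpow_mul htpos.le]
    rw [one_div_mul_cancel (ne_of_gt hsR), Real.rpow_one]
  set m₁ : ℕ := ⌊x⌋₊ - 1 with hm₁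
  set m₂ : ℕ := m₁ - (s + 1) with hm₂
  have hfloor : s + K + 10 ≤ ⌊x⌋₊ := by
    apply Nat.le_floor
    have hKc : ((s + K + 10 : ℕ) : ℝ) = (s:ℝ) + (K:ℝ) + 10 := by push_cast; ring
    rw [hKc]
    linarith
  have hflx : (⌊x⌋₊ : ℝ) ≤ x := Nat.floor_le hxpos.le
  have hxfl : x < ⌊x⌋₊ + 1 := Nat.lt_floor_add_one x
  have hc1 : (m₁ : ℝ) = (⌊x⌋₊ : ℝ) - 1 := by
    rw [hm₁, Nat.cast_sub (by omega : 1 ≤ ⌊x⌋₊)]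
    norm_num
  have hc2 : (m₂ : ℝ) = (⌊x⌋₊ : ℝ) - ((s:ℝ) + 2) := by
    rw [hm₂, hm₁, Nat.sub_sub, Nat.cast_sub (by omega : 1 + (s + 1) ≤ ⌊x⌋₊)]
    push_cast
    ring
  have hm₁x : (m₁ : ℝ) < x := by
    rw [hc1]
    linarith
  have hm₂x : x - ((s:ℝ) + 3) ≤ (m₂ : ℝ) := by
    rw [hc2]
    linarith
  have hm12 : m₂ + (s + 1) ≤ m₁ := by omega
  -- witness events
  set Good : (ℓ : Fin (s+1)) → ((Fin (ℓ:ℕ) → Vtx n) × Finset (Vtx n)) → Prop :=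
    fun ℓ y => y.2.card = m₂ ∧ (ℓ:ℕ) + m₂ ≤ (Stmt14Aux.witCoords n ℓ u y.1 y.2).card with hGood
  set Ev : (ℓ : Fin (s+1)) → ((Fin (ℓ:ℕ) → Vtx n) × Finset (Vtx n)) → Set (Fin (n*n) → Bool) :=
    fun ℓ y => if Good ℓ y then Stmt14Aux.cyl n (Stmt14Aux.witCoords n ℓ u y.1 y.2) else ∅
    with hEv
  have hincl : {A : Fin (n*n) → Bool | t ≤ ((ball n A u s).ncard : ℝ)} ⊆
      ⋃ ℓ, ⋃ y, Ev ℓ y := by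
    intro A hA
    simp only [Set.mem_setOf_eq] at hA
    have hbig : ∃ v ∈ ball n A u s, m₁ ≤ (Stmt14Aux.nbr n A v).ncard := by
      by_contra hc
      push_neg at hc
      have hdeg : ∀ v ∈ ball n A u s, (Stmt14Aux.nbr n A v).ncard ≤ m₁ - 1 := by
        intro v hv
        have := hc v hv
        omega
      have h1 := Stmt14Aux.ball_ncard_le hdeg s le_rfl
      rw [show m₁ - 1 + 1 = m₁ from by omega] at h1
      have h2 : ((ball n A u s).ncard : ℝ) ≤ (m₁ : ℝ) ^ s := by exact_mod_cast h1
      have h3 : (m₁ : ℝ) ^ s < x ^ s := by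
        apply pow_lt_pow_left₀ hm₁x (by positivity)
        omega
      rw [hxs] at h3
      linarith
    obtain ⟨ℓ, hℓs, g, S, hSc, hcard, hmem⟩ := Stmt14Aux.exists_witness hbig hm12
    refine Set.mem_iUnion.mpr ⟨⟨ℓ, by omega⟩, Set.mem_iUnion.mpr ⟨(g, S), ?_⟩⟩
    rw [hEv]
    simp only
    rw [if_pos (show Good ⟨ℓ, by omega⟩ (g, S) from ⟨hSc, hcard⟩)]
    exact hmem
  have hp0 : (0:ℝ) ≤ d / n := by positivity
  have hp1 : d / n ≤ 1 := by
    rw [div_le_one hn0]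
    exact hdn
  set F : ℕ → ℝ := fun ℓ =>
    (((n + n) ^ ℓ * ((n + n).choose m₂) : ℕ) : ℝ) * (d / n) ^ (ℓ + m₂) with hF
  have hEvle : ∀ (ℓ : Fin (s+1)) (y : (Fin (ℓ:ℕ) → Vtx n) × Finset (Vtx n)),
      edgeMeasure n d (Ev ℓ y) ≤
        (if Good ℓ y then ENNReal.ofReal ((d/n) ^ ((ℓ:ℕ) + m₂)) else 0) := by
    intro ℓ y
    rw [hEv]
    simp only
    split_ifs with h
    · rw [Stmt14Aux.measure_cyl n hd.le hdn _]
      exact ENNReal.ofReal_le_ofReal (pow_le_pow_of_le_one hp0 hp1 h.2)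
    · simp
  have hcount : ∀ ℓ : Fin (s+1),
      (∑ y : (Fin (ℓ:ℕ) → Vtx n) × Finset (Vtx n), edgeMeasure n d (Ev ℓ y)) ≤
        ENNReal.ofReal (F (ℓ:ℕ)) := by
    intro ℓ
    have h1 : (∑ y : (Fin (ℓ:ℕ) → Vtx n) × Finset (Vtx n), edgeMeasure n d (Ev ℓ y)) ≤
        ∑ y : (Fin (ℓ:ℕ) → Vtx n) × Finset (Vtx n),
          (if Good ℓ y then ENNReal.ofReal ((d/n) ^ ((ℓ:ℕ) + m₂)) else 0) :=
      Finset.sum_le_sum fun y _ => hEvle ℓ y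
    have h2 : (∑ y : (Fin (ℓ:ℕ) → Vtx n) × Finset (Vtx n),
          (if Good ℓ y then ENNReal.ofReal ((d/n) ^ ((ℓ:ℕ) + m₂)) else 0))
        = (Finset.univ.filter (Good ℓ)).card • ENNReal.ofReal ((d/n) ^ ((ℓ:ℕ) + m₂)) := by
      rw [← Finset.sum_filter, Finset.sum_const]
    have h3 : (Finset.univ.filter (Good ℓ)).card ≤ (n + n) ^ (ℓ:ℕ) * ((n + n).choose m₂) := by
      have hsub : Finset.univ.filter (Good ℓ) ⊆
          (Finset.univ : Finset (Fin (ℓ:ℕ) → Vtx n)) ×ˢ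
            Finset.powersetCard m₂ (Finset.univ : Finset (Vtx n)) := by
        intro y hy
        rw [Finset.mem_filter] at hy
        exact Finset.mem_product.mpr ⟨Finset.mem_univ _,
          Finset.mem_powersetCard.mpr ⟨Finset.subset_univ _, hy.2.1⟩⟩
      have hcard2 := Finset.card_le_card hsub
      rw [Finset.card_product, Finset.card_univ, Finset.card_powersetCard, Finset.card_univ] at hcard2
      have e1 : Fintype.card (Fin (ℓ:ℕ) → Vtx n) = (n + n) ^ (ℓ:ℕ) := by
        rw [Fintype.card_fun]
        congr 1 <;> simp [Fintype.card_sum]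
      have e2 : Fintype.card (Vtx n) = n + n := by simp [Fintype.card_sum]
      rw [e1, e2] at hcard2
      exact hcard2
    calc (∑ y : (Fin (ℓ:ℕ) → Vtx n) × Finset (Vtx n), edgeMeasure n d (Ev ℓ y))
        ≤ (Finset.univ.filter (Good ℓ)).card • ENNReal.ofReal ((d/n) ^ ((ℓ:ℕ) + m₂)) := by
          rw [← h2]
          exact h1
      _ ≤ ((n + n) ^ (ℓ:ℕ) * ((n + n).choose m₂) : ℕ) •
            ENNReal.ofReal ((d/n) ^ ((ℓ:ℕ) + m₂)) := by
          rw [nsmul_eq_mul, nsmul_eq_mul]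
          exact mul_le_mul_left (by exact_mod_cast Nat.cast_le.mpr h3) _
      _ = ENNReal.ofReal (F (ℓ:ℕ)) := by
          rw [nsmul_eq_mul, ← ENNReal.ofReal_natCast, ← ENNReal.ofReal_mul (Nat.cast_nonneg _), hF]
  have hreal := Stmt14Aux.real_tail s n K m₂ d x hs hd hdn hK6 hK1 hm₂x
    (by rw [← hC₅]; exact hbx) F (fun ℓ => by rw [hF])
  calc edgeMeasure n d {A | t ≤ ((ball n A u s).ncard : ℝ)}
      ≤ edgeMeasure n d (⋃ ℓ, ⋃ y, Ev ℓ y) := measure_mono hincl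
    _ ≤ ∑' ℓ : Fin (s+1), edgeMeasure n d (⋃ y, Ev ℓ y) := measure_iUnion_le _
    _ ≤ ∑' ℓ : Fin (s+1), ∑' y : (Fin (ℓ:ℕ) → Vtx n) × Finset (Vtx n),
          edgeMeasure n d (Ev ℓ y) := ENNReal.tsum_le_tsum fun ℓ => measure_iUnion_le _
    _ = ∑ ℓ : Fin (s+1), ∑ y : (Fin (ℓ:ℕ) → Vtx n) × Finset (Vtx n),
          edgeMeasure n d (Ev ℓ y) := by simp [tsum_fintype]
    _ ≤ ∑ ℓ : Fin (s+1), ENNReal.ofReal (F (ℓ:ℕ)) :=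
          Finset.sum_le_sum fun ℓ _ => hcount ℓ
    _ = ENNReal.ofReal (∑ ℓ : Fin (s+1), F (ℓ:ℕ)) := by
          rw [ENNReal.ofReal_sum_of_nonneg]
          intro ℓ _
          rw [hF]
          positivity
    _ = ENNReal.ofReal (∑ ℓ ∈ Finset.range (s+1), F ℓ) := by
          rw [Fin.sum_univ_eq_sum_range]
    _ ≤ ENNReal.ofReal ((s : ℝ) * Real.exp (-(1/2) * x)) := ENNReal.ofReal_le_ofReal hreal
    _ = ENNReal.ofReal ((s : ℝ) * Real.exp (-(1/2) * t ^ ((1 : ℝ) / (s:ℝ)))) := by rw [hxdef]
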